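/- arXiv:0907.3037 — 3 statements merged into one kernel-verified Lean document; each statement's English description precedes it below -/
import Mathlib

section
/- Let d ≥ 1 and let P be a nonzero polynomial on ℝ^d of degree m with principal part P_m. Let N ∈ S^{d−1} satisfy P_m(N) ≠ 0. Then every Q ∈ L_N(P) is the constant polynomial P_m(N)/|P_m(N)|; in particular every element of L_N(P) is constant. -/
open MvPolynomial Filter Topology RealInnerProductSpace

noncomputable section

/-- Evaluation of a complex-coefficient polynomial at a real point of `ℝ^d`. -/
def evalP {d : ℕ} (P : MvPolynomial (Fin d) ℂ) (x : EuclideanSpace ℝ (Fin d)) : ℂ :=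
  MvPolynomial.eval (fun i => (x i : ℂ)) P

/-- The shifted polynomial `P_ξ(η) = P(η + ξ)`. -/
def shiftP {d : ℕ} (P : MvPolynomial (Fin d) ℂ) (ξ : EuclideanSpace ℝ (Fin d)) :
    MvPolynomial (Fin d) ℂ :=
  MvPolynomial.aeval (fun i => MvPolynomial.X i + MvPolynomial.C ((ξ i : ℂ))) P

/-- `Q̃(0) = sqrt (∑_α |Q^{(α)}(0)|²)`, using `Q^{(α)}(0) = α! ⬝ coeff α Q`. -/
def tildeZero {d : ℕ} (Q : MvPolynomial (Fin d) ℂ) : ℝ :=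
  Real.sqrt (∑ α ∈ Q.support,
    ((∏ i, Nat.factorial (α i) : ℝ) * ‖MvPolynomial.coeff α Q‖) ^ 2)

/-- The normalized shifted polynomial `P_ξ / P̃_ξ(0)`. -/
def normShift {d : ℕ} (P : MvPolynomial (Fin d) ℂ) (ξ : EuclideanSpace ℝ (Fin d)) :
    MvPolynomial (Fin d) ℂ :=
  ((tildeZero (shiftP P ξ) : ℂ))⁻¹ • shiftP P ξ

/-- `L(P)`: localizations of `P` at infinity (limits taken in the norm `Q ↦ Q̃(0)`). -/
def Lset {d : ℕ} (P : MvPolynomial (Fin d) ℂ) : Set (MvPolynomial (Fin d) ℂ) :=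
  {Q | ∃ ξ : ℕ → EuclideanSpace ℝ (Fin d),
    Tendsto (fun n => ‖ξ n‖) atTop atTop ∧
    Tendsto (fun n => tildeZero (normShift P (ξ n) - Q)) atTop (nhds 0)}

/-- `L_N(P)`: localizations of `P` at infinity in direction `N`. -/
def LNset {d : ℕ} (P : MvPolynomial (Fin d) ℂ) (N : EuclideanSpace ℝ (Fin d)) :
    Set (MvPolynomial (Fin d) ℂ) :=
  {Q | ∃ ξ : ℕ → EuclideanSpace ℝ (Fin d),
    Tendsto (fun n => ‖ξ n‖) atTop atTop ∧
    Tendsto (fun n => ‖ξ n‖⁻¹ • ξ n) atTop (nhds N) ∧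
    Tendsto (fun n => tildeZero (normShift P (ξ n) - Q)) atTop (nhds 0)}

/-- `P̃_V(ξ,t) = sup {|P(ξ+η)| : η ∈ V, |η| ≤ t}`. -/
def tildeSupV {d : ℕ} (P : MvPolynomial (Fin d) ℂ)
    (V : Submodule ℝ (EuclideanSpace ℝ (Fin d)))
    (ξ : EuclideanSpace ℝ (Fin d)) (t : ℝ) : ℝ :=
  sSup ((fun η => ‖evalP P (ξ + η)‖) '' {η | η ∈ V ∧ ‖η‖ ≤ t})

/-- `P̃(ξ,t) = P̃_{ℝ^d}(ξ,t)`. -/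
def tildeSup {d : ℕ} (P : MvPolynomial (Fin d) ℂ)
    (ξ : EuclideanSpace ℝ (Fin d)) (t : ℝ) : ℝ :=
  tildeSupV P ⊤ ξ t

/-- The filter `|ξ| → ∞` on `ℝ^d`. -/
def toInfty (d : ℕ) : Filter (EuclideanSpace ℝ (Fin d)) :=
  Filter.comap (fun ξ => ‖ξ‖) Filter.atTop

/-- `σ_P(V) = inf_{t ≥ 1} liminf_{|ξ|→∞} P̃_V(ξ,t) / P̃(ξ,t)`. -/
def sigmaP {d : ℕ} (P : MvPolynomial (Fin d) ℂ)
    (V : Submodule ℝ (EuclideanSpace ℝ (Fin d))) : ℝ :=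
  sInf {r | ∃ t : ℝ, 1 ≤ t ∧
    r = Filter.liminf (fun ξ => tildeSupV P V ξ t / tildeSup P ξ t) (toInfty d)}

/-- `σ_P(y) = σ_P(span {y})`. -/
def sigmaPt {d : ℕ} (P : MvPolynomial (Fin d) ℂ) (y : EuclideanSpace ℝ (Fin d)) : ℝ :=
  sigmaP P (Submodule.span ℝ {y})

/-- The reflected polynomial `P̌(x) = P(-x)`. -/
def checkP {d : ℕ} (P : MvPolynomial (Fin d) ℂ) : MvPolynomial (Fin d) ℂ :=
  MvPolynomial.aeval (fun i => -MvPolynomial.X i) P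

/-- `Λ(Q) = {η : Q(ξ + tη) = Q(ξ) for all ξ, t}` as a set. -/
def LambdaSet {d : ℕ} (Q : MvPolynomial (Fin d) ℂ) : Set (EuclideanSpace ℝ (Fin d)) :=
  {η | ∀ (ξ : EuclideanSpace ℝ (Fin d)) (t : ℝ), evalP Q (ξ + t • η) = evalP Q ξ}

/-- The dual cone `Γ° = {ξ : ⟨y,ξ⟩ ≥ 0 for all y ∈ Γ}`. -/
def dualCone {d : ℕ} (Γ : Set (EuclideanSpace ℝ (Fin d))) : Set (EuclideanSpace ℝ (Fin d)) :=
  {ξ | ∀ y ∈ Γ, 0 ≤ ⟪y, ξ⟫}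

namespace StmtAux
variable {d : ℕ}

def normC (R : MvPolynomial (Fin d) ℂ) : ℝ := ∑ α ∈ R.support, ‖R.coeff α‖

lemma normC_nonneg (R : MvPolynomial (Fin d) ℂ) : 0 ≤ normC R :=
  Finset.sum_nonneg fun _ _ => norm_nonneg _

lemma normC_eq_sum {R : MvPolynomial (Fin d) ℂ} {T : Finset ((Fin d) →₀ ℕ)}
    (h : R.support ⊆ T) : normC R = ∑ α ∈ T, ‖R.coeff α‖ :=
  Finset.sum_subset h (fun α _ hα => by simp [MvPolynomial.notMem_support_iff.mp hα])

lemma abs_coeff_le_normC (R : MvPolynomial (Fin d) ℂ) (α : (Fin d) →₀ ℕ) :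
    ‖R.coeff α‖ ≤ normC R := by
  by_cases h : α ∈ R.support
  · exact Finset.single_le_sum (f := fun α => ‖R.coeff α‖)
      (fun _ _ => norm_nonneg _) h
  · simp [MvPolynomial.notMem_support_iff.mp h, normC_nonneg]

lemma normC_add_le (R S : MvPolynomial (Fin d) ℂ) :
    normC (R + S) ≤ normC R + normC S := by
  rw [normC_eq_sum (T := R.support ∪ S.support) MvPolynomial.support_add,
    normC_eq_sum (T := R.support ∪ S.support) Finset.subset_union_left,
    normC_eq_sum (T := R.support ∪ S.support) Finset.subset_union_right,
    ← Finset.sum_add_distrib]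
  exact Finset.sum_le_sum fun α _ => by
    simpa [MvPolynomial.coeff_add] using norm_add_le _ _

lemma normC_mul_le (R S : MvPolynomial (Fin d) ℂ) :
    normC (R * S) ≤ normC R * normC S := by
  classical
  have h1 : normC (R * S) ≤ ∑ α ∈ (R * S).support,
      ∑ p ∈ Finset.HasAntidiagonal.antidiagonal α, ‖R.coeff p.1‖ * ‖S.coeff p.2‖ := by
    refine Finset.sum_le_sum fun α _ => ?_
    rw [MvPolynomial.coeff_mul]
    exact (norm_sum_le _ _).trans (le_of_eq (by simp [map_mul]))
  have h2 : ∑ α ∈ (R * S).support, ∑ p ∈ Finset.HasAntidiagonal.antidiagonal α,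
      ‖R.coeff p.1‖ * ‖S.coeff p.2‖
      = ∑ p ∈ (R * S).support.biUnion (fun α => Finset.HasAntidiagonal.antidiagonal α),
        ‖R.coeff p.1‖ * ‖S.coeff p.2‖ := by
    rw [Finset.sum_biUnion]
    intro a _ b _ hab
    apply Finset.disjoint_left.mpr
    intro p hp hp'
    exact hab ((Finset.HasAntidiagonal.mem_antidiagonal.mp hp).symm.trans (Finset.HasAntidiagonal.mem_antidiagonal.mp hp'))
  have h3 : ∑ p ∈ (R * S).support.biUnion (fun α => Finset.HasAntidiagonal.antidiagonal α),
      ‖R.coeff p.1‖ * ‖S.coeff p.2‖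
      ≤ ∑ p ∈ R.support ×ˢ S.support,
        ‖R.coeff p.1‖ * ‖S.coeff p.2‖ := by
    rw [← Finset.sum_inter_add_sum_sdiff ((R*S).support.biUnion _) (R.support ×ˢ S.support)]
    have hz : ∑ p ∈ ((R*S).support.biUnion (fun α => Finset.HasAntidiagonal.antidiagonal α)) \ (R.support ×ˢ S.support),
        ‖R.coeff p.1‖ * ‖S.coeff p.2‖ = 0 := by
      apply Finset.sum_eq_zero
      intro p hp
      rcases Finset.mem_sdiff.mp hp with ⟨_, hnp⟩
      rw [Finset.mem_product] at hnp
      push_neg at hnp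
      by_cases h : p.1 ∈ R.support
      · simp [MvPolynomial.notMem_support_iff.mp (hnp h)]
      · simp [MvPolynomial.notMem_support_iff.mp h]
    rw [hz, add_zero]
    exact Finset.sum_le_sum_of_subset_of_nonneg Finset.inter_subset_right
      (fun _ _ _ => mul_nonneg (norm_nonneg _) (norm_nonneg _))
  calc normC (R * S) ≤ _ := h1
    _ = _ := h2
    _ ≤ _ := h3
    _ = normC R * normC S := by
        rw [Finset.sum_product, normC, normC, Finset.sum_mul]
        exact Finset.sum_congr rfl fun _ _ => by rw [Finset.mul_sum]


lemma normC_C_le (c : ℂ) : normC (MvPolynomial.C (σ := Fin d) c) ≤ ‖c‖ := by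
  rw [MvPolynomial.C_apply, normC_eq_sum (T := {0}) (MvPolynomial.support_monomial_subset (s := 0))]
  simp [MvPolynomial.coeff_C]

lemma normC_sum_le {ι : Type*} (s : Finset ι) (f : ι → MvPolynomial (Fin d) ℂ) :
    normC (∑ i ∈ s, f i) ≤ ∑ i ∈ s, normC (f i) := by
  classical
  induction s using Finset.induction_on with
  | empty => simp [normC]
  | insert _ _ h ih =>
    rw [Finset.sum_insert h, Finset.sum_insert h]
    exact (normC_add_le _ _).trans (by linarith)

lemma normC_prod_le {ι : Type*} (s : Finset ι) (f : ι → MvPolynomial (Fin d) ℂ)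
    (g : ι → ℝ) (hg : ∀ i ∈ s, normC (f i) ≤ g i) (hg0 : ∀ i ∈ s, 0 ≤ g i) :
    normC (∏ i ∈ s, f i) ≤ ∏ i ∈ s, g i := by
  classical
  induction s using Finset.induction_on with
  | empty =>
    simpa using normC_C_le (d := d) 1
  | @insert a s h ih =>
    rw [Finset.prod_insert h, Finset.prod_insert h]
    refine (normC_mul_le _ _).trans ?_
    have h1 := ih (fun i hi => hg i (Finset.mem_insert_of_mem hi))
      (fun i hi => hg0 i (Finset.mem_insert_of_mem hi))
    exact mul_le_mul (hg a (Finset.mem_insert_self _ _)) h1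
      (normC_nonneg _) (hg0 a (Finset.mem_insert_self _ _))

lemma normC_pow_le (R : MvPolynomial (Fin d) ℂ) (g : ℝ) (hg : normC R ≤ g) (hg0 : 0 ≤ g)
    (n : ℕ) : normC (R ^ n) ≤ g ^ n := by
  induction n with
  | zero => simpa using normC_C_le (d := d) 1
  | succ n ih =>
    rw [pow_succ, pow_succ]
    exact (normC_mul_le _ _).trans (mul_le_mul ih hg (normC_nonneg _) (pow_nonneg hg0 _))

lemma normC_X (i : Fin d) : normC (MvPolynomial.X (R := ℂ) i) ≤ 1 := by
  simp [normC, MvPolynomial.support_X, MvPolynomial.coeff_X]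

lemma abs_coord_le (ξ : EuclideanSpace ℝ (Fin d)) (i : Fin d) : |ξ i| ≤ ‖ξ‖ := by
  rw [EuclideanSpace.norm_eq]
  have h0 : |ξ i| = Real.sqrt (‖ξ i‖ ^ 2) := by
    rw [Real.sqrt_sq_eq_abs]; simp [abs_abs, Real.norm_eq_abs]
  rw [h0]
  apply Real.sqrt_le_sqrt
  exact Finset.single_le_sum (f := fun j => ‖ξ j‖ ^ 2) (fun _ _ => sq_nonneg _)
    (Finset.mem_univ i)

lemma normC_shiftP_le (R : MvPolynomial (Fin d) ℂ) (ξ : EuclideanSpace ℝ (Fin d)) :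
    normC (shiftP R ξ) ≤ normC R * (1 + ‖ξ‖) ^ R.totalDegree := by
  classical
  have hb : (0:ℝ) ≤ 1 + ‖ξ‖ := by positivity
  have hb1 : (1:ℝ) ≤ 1 + ‖ξ‖ := by have := norm_nonneg ξ; linarith
  rw [shiftP, MvPolynomial.aeval_def, MvPolynomial.eval₂_eq]
  refine (normC_sum_le _ _).trans ?_
  rw [normC, Finset.sum_mul]
  refine Finset.sum_le_sum fun β hβ => ?_
  have hfac : ∀ i ∈ β.support, normC ((MvPolynomial.X i + MvPolynomial.C ((ξ i : ℂ))) ^ β i)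
      ≤ (1 + ‖ξ‖) ^ β i := by
    intro i _
    apply normC_pow_le
    · refine (normC_add_le _ _).trans ?_
      have := normC_C_le (d := d) ((ξ i : ℂ))
      have h2 : ‖(ξ i : ℂ)‖ ≤ ‖ξ‖ := by
        rw [Complex.norm_real, Real.norm_eq_abs]; exact abs_coord_le ξ i
      have := normC_X (d := d) i
      linarith
    · exact hb
  have hmon : normC ((algebraMap ℂ (MvPolynomial (Fin d) ℂ)) (R.coeff β) *
      ∏ i ∈ β.support, (MvPolynomial.X i + MvPolynomial.C ((ξ i : ℂ))) ^ β i)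
      ≤ ‖R.coeff β‖ * (1 + ‖ξ‖) ^ R.totalDegree := by
    refine (normC_mul_le _ _).trans ?_
    refine mul_le_mul (normC_C_le _) ?_ (normC_nonneg _) (norm_nonneg _)
    refine (normC_prod_le _ _ (fun i => (1 + ‖ξ‖) ^ β i) hfac
      (fun i _ => pow_nonneg hb _)).trans ?_
    rw [Finset.prod_pow_eq_pow_sum]
    exact pow_le_pow_right₀ hb1 (MvPolynomial.le_totalDegree hβ)
  exact hmon

lemma coeff_pderiv (i : Fin d) (β : Fin d →₀ ℕ) (R : MvPolynomial (Fin d) ℂ) :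
    (MvPolynomial.pderiv i R).coeff β = ((β i : ℂ) + 1) * R.coeff (β + Finsupp.single i 1) := by
  induction R using MvPolynomial.induction_on' with
  | add p q hp hq => simp [hp, hq]; ring
  | monomial γ c =>
    rw [MvPolynomial.pderiv_monomial, MvPolynomial.coeff_monomial, MvPolynomial.coeff_monomial]
    by_cases h0 : γ i = 0
    · have hγ : γ ≠ β + Finsupp.single i 1 := by
        intro he
        have := congrArg (fun f => f i) he
        simp [Finsupp.add_apply, Finsupp.single_apply, h0] at this
      rw [if_neg hγ, mul_zero]
      by_cases h1 : γ - Finsupp.single i 1 = β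
      · rw [if_pos h1, h0]; simp
      · rw [if_neg h1]
    · by_cases h : γ = β + Finsupp.single i 1
      · subst h
        have h1 : β + Finsupp.single i 1 - Finsupp.single i 1 = β := add_tsub_cancel_right β _
        rw [if_pos h1, if_pos rfl]
        simp only [Finsupp.add_apply, Finsupp.single_apply, if_pos rfl, if_true]
        push_cast
        ring
      · rw [if_neg h, mul_zero]
        by_cases h1 : γ - Finsupp.single i 1 = β
        · exfalso
          apply h
          ext j
          have hj := congrArg (fun f => f j) h1
          simp only [Finsupp.tsub_apply, Finsupp.single_apply, Finsupp.coe_add,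
            Pi.add_apply] at hj ⊢
          by_cases hji : i = j
          · subst hji; simp only [if_pos rfl, if_true, eq_self_iff_true] at hj ⊢; omega
          · simp only [if_neg hji] at hj ⊢; omega
        · rw [if_neg h1]

lemma totalDegree_pderiv_le (i : Fin d) (R : MvPolynomial (Fin d) ℂ) :
    (MvPolynomial.pderiv i R).totalDegree ≤ R.totalDegree - 1 := by
  rw [MvPolynomial.totalDegree]
  apply Finset.sup_le
  intro β hβ
  have hc : (MvPolynomial.pderiv i R).coeff β ≠ 0 := MvPolynomial.mem_support_iff.mp hβ
  rw [coeff_pderiv] at hc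
  have h2 : R.coeff (β + Finsupp.single i 1) ≠ 0 := fun h => hc (by rw [h, mul_zero])
  have h3 := MvPolynomial.le_totalDegree (MvPolynomial.mem_support_iff.mpr h2)
  have h4 : (β + Finsupp.single i 1).sum (fun _ e => e) = β.sum (fun _ e => e) + 1 := by
    rw [Finsupp.sum_add_index' (fun _ => rfl) (fun _ _ _ => rfl),
      Finsupp.sum_single_index rfl]
  omega

lemma pderiv_shiftP (i : Fin d) (R : MvPolynomial (Fin d) ℂ) (ξ : EuclideanSpace ℝ (Fin d)) :
    MvPolynomial.pderiv i (shiftP R ξ) = shiftP (MvPolynomial.pderiv i R) ξ := by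
  classical
  induction R using MvPolynomial.induction_on with
  | C a => simp [shiftP, MvPolynomial.pderiv_C]
  | add p q hp hq => simp only [shiftP, map_add] at *; rw [hp, hq]
  | mul_X p j hp =>
    simp only [shiftP, map_mul, map_add, MvPolynomial.aeval_X, MvPolynomial.pderiv_mul] at *
    rw [hp]
    by_cases h : i = j
    · subst h
      simp [MvPolynomial.pderiv_X_self, MvPolynomial.pderiv_C]
    · simp [MvPolynomial.pderiv_X_of_ne (Ne.symm h), MvPolynomial.pderiv_C]

lemma eval_shiftP (R : MvPolynomial (Fin d) ℂ) (ξ : EuclideanSpace ℝ (Fin d)) (x : Fin d → ℂ) :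
    MvPolynomial.eval x (shiftP R ξ) = MvPolynomial.eval (fun i => x i + (ξ i : ℂ)) R := by
  rw [shiftP, MvPolynomial.aeval_def, MvPolynomial.eval_eval₂]
  have h1 : (MvPolynomial.eval x).comp (algebraMap ℂ (MvPolynomial (Fin d) ℂ)) = RingHom.id ℂ := by
    ext c; simp
  rw [h1, MvPolynomial.eval₂_id]
  simp

lemma eval_zero_eq_constantCoeff (p : MvPolynomial (Fin d) ℂ) :
    MvPolynomial.eval (fun _ => (0:ℂ)) p = MvPolynomial.constantCoeff p := by
  induction p using MvPolynomial.induction_on with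
  | C a => simp
  | add p q hp hq => simp [hp, hq]
  | mul_X p j hp => simp [hp]

lemma coeff_zero_shiftP (R : MvPolynomial (Fin d) ℂ) (ξ : EuclideanSpace ℝ (Fin d)) :
    (shiftP R ξ).coeff 0 = evalP R ξ := by
  have h1 : (shiftP R ξ).coeff 0 = MvPolynomial.constantCoeff (shiftP R ξ) := rfl
  rw [h1, ← eval_zero_eq_constantCoeff, eval_shiftP]
  simp [evalP]

lemma eval_smul_homog {φ : MvPolynomial (Fin d) ℂ} {n : ℕ} (h : φ.IsHomogeneous n)
    (c : ℂ) (x : Fin d → ℂ) :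
    MvPolynomial.eval (fun i => c * x i) φ = c ^ n * MvPolynomial.eval x φ := by
  rw [MvPolynomial.eval_eq, MvPolynomial.eval_eq, Finset.mul_sum]
  refine Finset.sum_congr rfl fun β hβ => ?_
  have hdeg : β.degree = n := by
    by_contra hne
    exact MvPolynomial.mem_support_iff.mp hβ (h.coeff_eq_zero hne)
  have hprod : ∏ i ∈ β.support, (c * x i) ^ β i
      = c ^ n * ∏ i ∈ β.support, x i ^ β i := by
    rw [← hdeg, Finsupp.degree_apply, ← Finset.prod_pow_eq_pow_sum, ← Finset.prod_mul_distrib]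
    exact Finset.prod_congr rfl fun i _ => mul_pow _ _ _
  rw [hprod]; ring

lemma totalDegree_shiftP_le (R : MvPolynomial (Fin d) ℂ) (ξ : EuclideanSpace ℝ (Fin d)) :
    (shiftP R ξ).totalDegree ≤ R.totalDegree := by
  rw [shiftP, MvPolynomial.aeval_def, MvPolynomial.eval₂_eq]
  refine (MvPolynomial.totalDegree_finset_sum _ _).trans ?_
  apply Finset.sup_le
  intro β hβ
  refine (MvPolynomial.totalDegree_mul _ _).trans ?_
  have hC : ((algebraMap ℂ (MvPolynomial (Fin d) ℂ)) (R.coeff β)).totalDegree = 0 := by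
    rw [MvPolynomial.algebraMap_eq, MvPolynomial.totalDegree_C]
  rw [hC, zero_add]
  refine (MvPolynomial.totalDegree_finset_prod _ _).trans ?_
  have h2 : ∀ i ∈ β.support,
      ((MvPolynomial.X i + MvPolynomial.C ((ξ i : ℂ))) ^ β i).totalDegree ≤ β i := by
    intro i _
    refine (MvPolynomial.totalDegree_pow _ _).trans ?_
    have : (MvPolynomial.X (R := ℂ) i + MvPolynomial.C ((ξ i : ℂ))).totalDegree ≤ 1 := by
      refine (MvPolynomial.totalDegree_add _ _).trans ?_
      simp [MvPolynomial.totalDegree_X, MvPolynomial.totalDegree_C]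
    calc β i * (MvPolynomial.X (R := ℂ) i + MvPolynomial.C ((ξ i : ℂ))).totalDegree
        ≤ β i * 1 := Nat.mul_le_mul_left _ this
      _ = β i := mul_one _
  refine (Finset.sum_le_sum h2).trans ?_
  exact MvPolynomial.le_totalDegree hβ

def bigT (m : ℕ) : Finset (Fin d →₀ ℕ) :=
  Finset.Iic (Finsupp.equivFunOnFinite.symm (fun _ => m))

lemma support_subset_bigT {R : MvPolynomial (Fin d) ℂ} {m : ℕ} (h : R.totalDegree ≤ m) :
    R.support ⊆ bigT m := by
  intro α hα
  rw [bigT, Finset.mem_Iic]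
  intro i
  have hM : (Finsupp.equivFunOnFinite.symm (fun _ => m) : Fin d →₀ ℕ) i = m := rfl
  rw [hM]
  by_cases h0 : i ∈ α.support
  · have h1 : α i ≤ ∑ j ∈ α.support, α j :=
      Finset.single_le_sum (f := fun j => α j) (fun _ _ => Nat.zero_le _) h0
    have h2 : α.sum (fun _ e => e) ≤ R.totalDegree := MvPolynomial.le_totalDegree hα
    have h3 : α.sum (fun _ e => e) = ∑ j ∈ α.support, α j := rfl
    omega
  · rw [Finsupp.notMem_support_iff.mp h0]
    exact Nat.zero_le _

lemma tildeZero_eq_sum {Q : MvPolynomial (Fin d) ℂ} {T : Finset (Fin d →₀ ℕ)}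
    (h : Q.support ⊆ T) :
    tildeZero Q = Real.sqrt (∑ α ∈ T,
      ((∏ i, Nat.factorial (α i) : ℝ) * ‖Q.coeff α‖) ^ 2) := by
  rw [tildeZero]
  congr 1
  apply Finset.sum_subset h
  intro α _ hα
  simp [MvPolynomial.notMem_support_iff.mp hα]

lemma one_le_facprod (α : Fin d →₀ ℕ) : (1:ℝ) ≤ (∏ i, Nat.factorial (α i) : ℝ) := by
  have : (1:ℕ) ≤ ∏ i, Nat.factorial (α i) :=
    Finset.one_le_prod' (fun i _ => Nat.one_le_iff_ne_zero.mpr (Nat.factorial_ne_zero _))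
  exact_mod_cast this

lemma abs_coeff_le_tildeZero (Q : MvPolynomial (Fin d) ℂ) (α : Fin d →₀ ℕ) :
    ‖Q.coeff α‖ ≤ tildeZero Q := by
  by_cases h : α ∈ Q.support
  · have h1 := one_le_facprod α
    have h2 : ‖Q.coeff α‖ ≤ (∏ i, Nat.factorial (α i) : ℝ) * ‖Q.coeff α‖ := by
      nlinarith [norm_nonneg (Q.coeff α)]
    have h3 : ((∏ i, Nat.factorial (α i) : ℝ) * ‖Q.coeff α‖) ^ 2
        ≤ ∑ β ∈ Q.support, ((∏ i, Nat.factorial (β i) : ℝ) * ‖Q.coeff β‖) ^ 2 :=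
      Finset.single_le_sum (f := fun β => ((∏ i, Nat.factorial (β i) : ℝ) * ‖Q.coeff β‖) ^ 2)
        (fun _ _ => sq_nonneg _) h
    calc ‖Q.coeff α‖
        ≤ (∏ i, Nat.factorial (α i) : ℝ) * ‖Q.coeff α‖ := h2
      _ = Real.sqrt (((∏ i, Nat.factorial (α i) : ℝ) * ‖Q.coeff α‖) ^ 2) := by
          rw [Real.sqrt_sq (by positivity)]
      _ ≤ tildeZero Q := by rw [tildeZero]; exact Real.sqrt_le_sqrt h3
  · rw [MvPolynomial.notMem_support_iff.mp h]
    simp only [norm_zero]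
    exact Real.sqrt_nonneg _

lemma continuous_evalP (R : MvPolynomial (Fin d) ℂ) : Continuous (evalP R) := by
  have h1 : Continuous fun (x : EuclideanSpace ℝ (Fin d)) => (fun i => (x i : ℂ)) := by
    apply continuous_pi
    intro i
    exact Complex.continuous_ofReal.comp (EuclideanSpace.proj i).continuous
  exact (MvPolynomial.continuous_eval R).comp h1

lemma evalP_homog_smul {φ : MvPolynomial (Fin d) ℂ} {k : ℕ} (h : φ.IsHomogeneous k)
    (r : ℝ) (x : EuclideanSpace ℝ (Fin d)) :
    evalP φ (r • x) = ((r : ℂ)) ^ k * evalP φ x := by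
  have h0 : (fun i => (((r • x : EuclideanSpace ℝ (Fin d)) i : ℝ) : ℂ))
      = fun i => (r : ℂ) * ((x i : ℝ) : ℂ) := by
    funext i
    have : (r • x : EuclideanSpace ℝ (Fin d)) i = r * x i := rfl
    rw [this]; push_cast; ring
  rw [evalP, h0, eval_smul_homog h]
  rfl

lemma tendsto_evalP_div (P : MvPolynomial (Fin d) ℂ) (N : EuclideanSpace ℝ (Fin d))
    (ξ : ℕ → EuclideanSpace ℝ (Fin d))
    (h1 : Tendsto (fun n => ‖ξ n‖) atTop atTop)
    (h2 : Tendsto (fun n => ‖ξ n‖⁻¹ • ξ n) atTop (nhds N)) :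
    Tendsto (fun n => evalP P (ξ n) / ((‖ξ n‖ : ℂ)) ^ P.totalDegree) atTop
      (nhds (evalP (MvPolynomial.homogeneousComponent P.totalDegree P) N)) := by
  set m := P.totalDegree with hm
  set u : ℕ → EuclideanSpace ℝ (Fin d) := fun n => ‖ξ n‖⁻¹ • ξ n with hu
  let G : ℕ → ℕ → ℂ := fun k n =>
    evalP (MvPolynomial.homogeneousComponent k P) (u n) * ((‖ξ n‖⁻¹ : ℝ) : ℂ) ^ (m - k)
  have hGdef : ∀ k n, G k n
      = evalP (MvPolynomial.homogeneousComponent k P) (u n) * ((‖ξ n‖⁻¹ : ℝ) : ℂ) ^ (m - k) :=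
    fun _ _ => rfl
  have hev : ∀ᶠ n in atTop, evalP P (ξ n) / ((‖ξ n‖ : ℂ)) ^ m
      = ∑ k ∈ Finset.range (m + 1), G k n := by
    filter_upwards [h1.eventually_ge_atTop 1] with n hn
    have hr0 : (0:ℝ) < ‖ξ n‖ := lt_of_lt_of_le one_pos hn
    have hrC : ((‖ξ n‖ : ℝ) : ℂ) ≠ 0 := by
      simp only [ne_eq, Complex.ofReal_eq_zero]; exact ne_of_gt hr0
    have hξn : ξ n = ‖ξ n‖ • u n := (smul_inv_smul₀ (ne_of_gt hr0) (ξ n)).symm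
    have hsum : evalP P (ξ n)
        = ∑ k ∈ Finset.range (m + 1), evalP (MvPolynomial.homogeneousComponent k P) (ξ n) := by
      conv_lhs => rw [evalP, ← MvPolynomial.sum_homogeneousComponent P, map_sum]
      rfl
    rw [hsum, Finset.sum_div]
    refine Finset.sum_congr rfl fun k hk => ?_
    have hkm : k ≤ m := Nat.lt_succ_iff.mp (Finset.mem_range.mp hk)
    have hhom := MvPolynomial.homogeneousComponent_isHomogeneous k P
    have hsm : evalP (MvPolynomial.homogeneousComponent k P) (ξ n)
        = ((‖ξ n‖ : ℝ) : ℂ) ^ k * evalP (MvPolynomial.homogeneousComponent k P) (u n) := by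
      conv_lhs => rw [hξn]
      exact evalP_homog_smul hhom _ _
    rw [hsm, hGdef]
    have hmk : m - k + k = m := Nat.sub_add_cancel hkm
    have hpow0 : ((‖ξ n‖ : ℝ) : ℂ) ^ m = ((‖ξ n‖ : ℝ) : ℂ) ^ (m - k) * ((‖ξ n‖ : ℝ) : ℂ) ^ k := by
      rw [← pow_add, hmk]
    have hpow : ((‖ξ n‖ : ℝ) : ℂ) ^ k / ((‖ξ n‖ : ℝ) : ℂ) ^ m
        = ((‖ξ n‖⁻¹ : ℝ) : ℂ) ^ (m - k) := by
      rw [Complex.ofReal_inv, inv_pow, div_eq_iff (pow_ne_zero m hrC), hpow0,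
        inv_mul_cancel_left₀ (pow_ne_zero _ hrC)]
    rw [mul_comm, mul_div_assoc, hpow]
  have hsumT : Tendsto (fun n => ∑ k ∈ Finset.range (m + 1), G k n) atTop
      (nhds (∑ k ∈ Finset.range (m + 1),
        (if k = m then evalP (MvPolynomial.homogeneousComponent m P) N else 0))) := by
    apply tendsto_finset_sum
    intro k hk
    have hcont : Tendsto (fun n => evalP (MvPolynomial.homogeneousComponent k P) (u n)) atTop
        (nhds (evalP (MvPolynomial.homogeneousComponent k P) N)) :=
      ((continuous_evalP _).tendsto N).comp h2
    by_cases hkm' : k = m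
    · have hGk : G k = fun n => evalP (MvPolynomial.homogeneousComponent k P) (u n) := by
        funext n; rw [hGdef, hkm', Nat.sub_self, pow_zero, mul_one]
      rw [if_pos hkm', hGk, ← hkm']
      exact hcont
    · have hinv : Tendsto (fun n => ((‖ξ n‖⁻¹ : ℝ) : ℂ)) atTop (nhds 0) := by
        have hi := h1.inv_tendsto_atTop
        have h3 := (Complex.continuous_ofReal.tendsto 0).comp hi
        rw [Complex.ofReal_zero] at h3
        exact h3.congr fun n => rfl
      have hkm : k ≤ m := Nat.lt_succ_iff.mp (Finset.mem_range.mp hk)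
      have hpowt : Tendsto (fun n => ((‖ξ n‖⁻¹ : ℝ) : ℂ) ^ (m - k)) atTop (nhds 0) := by
        have h0 : (0:ℂ) ^ (m - k) = 0 := zero_pow (by omega)
        simpa [h0] using hinv.pow (m - k)
      rw [if_neg hkm']
      have hmul := hcont.mul hpowt
      rw [mul_zero] at hmul
      exact hmul
  have hfin : ∑ k ∈ Finset.range (m + 1),
      (if k = m then evalP (MvPolynomial.homogeneousComponent m P) N else 0)
      = evalP (MvPolynomial.homogeneousComponent m P) N := by
    rw [Finset.sum_ite_eq' (Finset.range (m + 1)) m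
      (fun _ => evalP (MvPolynomial.homogeneousComponent m P) N)]
    simp
  rw [hfin] at hsumT
  exact hsumT.congr' (hev.mono fun n hn => hn.symm)

lemma tendsto_coeff_div (P : MvPolynomial (Fin d) ℂ)
    (ξ : ℕ → EuclideanSpace ℝ (Fin d))
    (h1 : Tendsto (fun n => ‖ξ n‖) atTop atTop)
    (α : Fin d →₀ ℕ) (hα : α ≠ 0) :
    Tendsto (fun n => (shiftP P (ξ n)).coeff α / ((‖ξ n‖ : ℂ)) ^ P.totalDegree)
      atTop (nhds 0) := by
  set m := P.totalDegree with hm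
  by_cases hm0 : m = 0
  · have hz : ∀ n, (shiftP P (ξ n)).coeff α = 0 := by
      intro n
      by_contra h
      have hs : α ∈ (shiftP P (ξ n)).support := MvPolynomial.mem_support_iff.mpr h
      have hdeg := MvPolynomial.le_totalDegree hs
      have hts := totalDegree_shiftP_le P (ξ n)
      have hα0 : α.sum (fun _ e => e) = 0 := by omega
      apply hα
      ext i
      by_cases hi : i ∈ α.support
      · have hle : α i ≤ ∑ j ∈ α.support, α j :=
          Finset.single_le_sum (f := fun j => α j) (fun _ _ => Nat.zero_le _) hi
        have hsz : ∑ j ∈ α.support, α j = 0 := hα0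
        simp only [Finsupp.coe_zero, Pi.zero_apply]
        omega
      · simpa using Finsupp.notMem_support_iff.mp hi
    have : (fun n => (shiftP P (ξ n)).coeff α / ((‖ξ n‖ : ℂ)) ^ m) = fun _ => 0 := by
      funext n; rw [hz n, zero_div]
    rw [this]
    exact tendsto_const_nhds
  · obtain ⟨i, hi⟩ : ∃ i, α i ≠ 0 := by
      by_contra h
      push_neg at h
      exact hα (Finsupp.ext fun i => h i)
    set β := α - Finsupp.single i 1 with hβ
    have hβα : β + Finsupp.single i 1 = α := by
      rw [hβ]
      exact tsub_add_cancel_of_le (by rw [Finsupp.single_le_iff]; omega)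
    set C0 := normC (MvPolynomial.pderiv i P) with hC0
    have hC0n : 0 ≤ C0 := normC_nonneg _
    have hbound : ∀ n, 1 ≤ ‖ξ n‖ →
        ‖(shiftP P (ξ n)).coeff α‖ ≤ C0 * 2 ^ (m - 1) * ‖ξ n‖ ^ (m - 1) := by
      intro n hn
      have hkey : (shiftP (MvPolynomial.pderiv i P) (ξ n)).coeff β
          = ((β i : ℂ) + 1) * (shiftP P (ξ n)).coeff α := by
        rw [← pderiv_shiftP, coeff_pderiv, hβα]
      have h5 : ‖(shiftP P (ξ n)).coeff α‖
          ≤ ‖(shiftP (MvPolynomial.pderiv i P) (ξ n)).coeff β‖ := by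
        rw [hkey, norm_mul]
        have h6 : (1:ℝ) ≤ ‖(β i : ℂ) + 1‖ := by
          have hc : ((β i : ℂ) + 1) = ((β i + 1 : ℕ) : ℂ) := by push_cast; ring
          rw [hc, Complex.norm_natCast]
          exact_mod_cast Nat.succ_le_succ (Nat.zero_le _)
        nlinarith [norm_nonneg ((shiftP P (ξ n)).coeff α)]
      have h7 := (abs_coeff_le_normC (shiftP (MvPolynomial.pderiv i P) (ξ n)) β).trans
        (normC_shiftP_le (MvPolynomial.pderiv i P) (ξ n))
      have h8 : (1 + ‖ξ n‖) ^ (MvPolynomial.pderiv i P).totalDegree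
          ≤ (2 * ‖ξ n‖) ^ (m - 1) := by
        have hd := totalDegree_pderiv_le i P
        calc (1 + ‖ξ n‖) ^ (MvPolynomial.pderiv i P).totalDegree
            ≤ (1 + ‖ξ n‖) ^ (m - 1) := pow_le_pow_right₀ (by linarith) hd
          _ ≤ (2 * ‖ξ n‖) ^ (m - 1) := pow_le_pow_left₀ (by linarith) (by linarith) _
      have h9 : C0 * (1 + ‖ξ n‖) ^ (MvPolynomial.pderiv i P).totalDegree
          ≤ C0 * (2 * ‖ξ n‖) ^ (m - 1) := mul_le_mul_of_nonneg_left h8 hC0n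
      have h10 : (2 * ‖ξ n‖) ^ (m - 1) = 2 ^ (m - 1) * ‖ξ n‖ ^ (m - 1) := mul_pow _ _ _
      calc ‖(shiftP P (ξ n)).coeff α‖
          ≤ C0 * (1 + ‖ξ n‖) ^ (MvPolynomial.pderiv i P).totalDegree := h5.trans h7
        _ ≤ C0 * (2 * ‖ξ n‖) ^ (m - 1) := h9
        _ = C0 * 2 ^ (m - 1) * ‖ξ n‖ ^ (m - 1) := by rw [h10, mul_assoc]
    have hg : Tendsto (fun n => (C0 * 2 ^ (m - 1)) / ‖ξ n‖) atTop (nhds 0) :=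
      tendsto_const_nhds.div_atTop h1
    apply squeeze_zero_norm' ?_ hg
    filter_upwards [h1.eventually_ge_atTop 1] with n hn
    have hr0 : (0:ℝ) < ‖ξ n‖ := lt_of_lt_of_le one_pos hn
    have hnorm : ‖(shiftP P (ξ n)).coeff α / ((‖ξ n‖ : ℂ)) ^ m‖
        = ‖(shiftP P (ξ n)).coeff α‖ / ‖ξ n‖ ^ m := by
      rw [norm_div, norm_pow, Complex.norm_real, Real.norm_eq_abs, abs_of_pos hr0]
    rw [hnorm]
    have hpowm : ‖ξ n‖ ^ (m - 1) * ‖ξ n‖ = ‖ξ n‖ ^ m := by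
      rw [← pow_succ]
      congr 1
      omega
    rw [div_le_div_iff₀ (pow_pos hr0 m) hr0]
    have hb := hbound n hn
    calc ‖(shiftP P (ξ n)).coeff α‖ * ‖ξ n‖
        ≤ (C0 * 2 ^ (m - 1) * ‖ξ n‖ ^ (m - 1)) * ‖ξ n‖ :=
          mul_le_mul_of_nonneg_right hb hr0.le
      _ = C0 * 2 ^ (m - 1) * ‖ξ n‖ ^ m := by rw [← hpowm]; ring

lemma tendsto_tildeZero_div (P : MvPolynomial (Fin d) ℂ) (N : EuclideanSpace ℝ (Fin d))
    (ξ : ℕ → EuclideanSpace ℝ (Fin d))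
    (h1 : Tendsto (fun n => ‖ξ n‖) atTop atTop)
    (h2 : Tendsto (fun n => ‖ξ n‖⁻¹ • ξ n) atTop (nhds N)) :
    Tendsto (fun n => tildeZero (shiftP P (ξ n)) / ‖ξ n‖ ^ P.totalDegree) atTop
      (nhds (‖evalP (MvPolynomial.homogeneousComponent P.totalDegree P) N‖)) := by
  set m := P.totalDegree with hm
  set c0 := evalP (MvPolynomial.homogeneousComponent m P) N with hc0
  let s : ℕ → ℝ := fun n => ∑ α ∈ bigT (d := d) m,
    ((∏ i, Nat.factorial (α i) : ℝ) * ‖(shiftP P (ξ n)).coeff α / ((‖ξ n‖ : ℂ)) ^ m‖) ^ 2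
  have hsdef : ∀ n, s n = ∑ α ∈ bigT (d := d) m,
      ((∏ i, Nat.factorial (α i) : ℝ) *
        ‖(shiftP P (ξ n)).coeff α / ((‖ξ n‖ : ℂ)) ^ m‖) ^ 2 := fun _ => rfl
  have hsT : Tendsto s atTop (nhds (∑ α ∈ bigT (d := d) m,
      (if α = 0 then ((∏ i, Nat.factorial (α i) : ℝ) * ‖c0‖) ^ 2 else 0))) := by
    apply tendsto_finset_sum
    intro α hαT
    by_cases hα : α = 0
    · subst hα
      rw [if_pos rfl]
      have hnum : Tendsto (fun n => (shiftP P (ξ n)).coeff 0 / ((‖ξ n‖ : ℂ)) ^ m) atTop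
          (nhds c0) := by
        have heq : (fun n => (shiftP P (ξ n)).coeff 0 / ((‖ξ n‖ : ℂ)) ^ m)
            = fun n => evalP P (ξ n) / ((‖ξ n‖ : ℂ)) ^ m := by
          funext n; rw [coeff_zero_shiftP]
        rw [heq]
        exact tendsto_evalP_div P N ξ h1 h2
      have habs : Tendsto (fun n => ‖(shiftP P (ξ n)).coeff 0 / ((‖ξ n‖ : ℂ)) ^ m‖)
          atTop (nhds (‖c0‖)) :=
        (continuous_norm.tendsto c0).comp hnum
      exact ((habs.const_mul _).pow 2)
    · rw [if_neg hα]
      have hnum := tendsto_coeff_div P ξ h1 α hα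
      have habs : Tendsto (fun n => ‖(shiftP P (ξ n)).coeff α / ((‖ξ n‖ : ℂ)) ^ m‖)
          atTop (nhds 0) := by
        have h4 := (continuous_norm.tendsto 0).comp hnum
        simp only [norm_zero] at h4
        exact h4.congr fun n => rfl
      have h5 := (habs.const_mul ((∏ i, Nat.factorial (α i) : ℝ))).pow 2
      have h6 : (((∏ i, Nat.factorial (α i) : ℝ)) * 0) ^ 2 = 0 := by simp
      rw [h6] at h5
      exact h5
  have hsum0 : ∑ α ∈ bigT (d := d) m,
      (if α = 0 then ((∏ i, Nat.factorial (α i) : ℝ) * ‖c0‖) ^ 2 else 0)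
      = (‖c0‖) ^ 2 := by
    rw [Finset.sum_ite_eq' (bigT (d := d) m) 0
      (fun α => ((∏ i, Nat.factorial (α i) : ℝ) * ‖c0‖) ^ 2)]
    have h0mem : (0 : Fin d →₀ ℕ) ∈ bigT (d := d) m := by
      rw [bigT, Finset.mem_Iic]
      exact zero_le
    rw [if_pos h0mem]
    simp
  rw [hsum0] at hsT
  have hsqrt : Tendsto (fun n => Real.sqrt (s n)) atTop (nhds (‖c0‖)) := by
    have := (Real.continuous_sqrt.tendsto _).comp hsT
    simpa [Function.comp_def, Real.sqrt_sq (norm_nonneg c0)] using this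
  apply hsqrt.congr'
  filter_upwards [h1.eventually_ge_atTop 1] with n hn
  have hr0 : (0:ℝ) < ‖ξ n‖ := lt_of_lt_of_le one_pos hn
  have hrm : (0:ℝ) < ‖ξ n‖ ^ m := pow_pos hr0 m
  have hTZ := tildeZero_eq_sum (Q := shiftP P (ξ n))
    (support_subset_bigT (totalDegree_shiftP_le P (ξ n)))
  have hSdiv : s n = (∑ α ∈ bigT (d := d) m,
      ((∏ i, Nat.factorial (α i) : ℝ) * ‖(shiftP P (ξ n)).coeff α‖) ^ 2)
      / (‖ξ n‖ ^ m) ^ 2 := by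
    rw [hsdef, Finset.sum_div]
    refine Finset.sum_congr rfl fun α _ => ?_
    rw [← div_pow]
    congr 1
    rw [norm_div, norm_pow, Complex.norm_real, Real.norm_eq_abs, abs_of_pos hr0, mul_div_assoc]
  rw [hSdiv, Real.sqrt_div (Finset.sum_nonneg fun _ _ => sq_nonneg _),
    Real.sqrt_sq (le_of_lt hrm), ← hTZ]

end StmtAux

/-- Lemma 2.1 ii): if `P_m(N) ≠ 0` for `N ∈ S^{d-1}`, then every `Q ∈ L_N(P)` is the
constant polynomial `P_m(N)/|P_m(N)|`. -/
theorem stmt1 (d : ℕ) (hd : 1 ≤ d) (P : MvPolynomial (Fin d) ℂ) (hP : P ≠ 0)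
    (N : EuclideanSpace ℝ (Fin d)) (hN : ‖N‖ = 1)
    (hPm : evalP (MvPolynomial.homogeneousComponent P.totalDegree P) N ≠ 0)
    (Q : MvPolynomial (Fin d) ℂ) (hQ : Q ∈ LNset P N) :
    Q = MvPolynomial.C (evalP (MvPolynomial.homogeneousComponent P.totalDegree P) N /
      ((‖evalP (MvPolynomial.homogeneousComponent P.totalDegree P) N‖ : ℝ) : ℂ)) := by
  classical
  obtain ⟨ξ, h1, h2, h3⟩ := hQ
  set m := P.totalDegree with hm
  set c0 := evalP (MvPolynomial.homogeneousComponent m P) N with hc0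
  set a : ℝ := ‖c0‖ with ha
  have ha0 : 0 < a := by
    rw [ha]
    exact norm_pos_iff.mpr hPm
  have hA : ∀ α : Fin d →₀ ℕ, Tendsto (fun n => (normShift P (ξ n)).coeff α) atTop
      (nhds (Q.coeff α)) := by
    intro α
    have hb : Tendsto (fun n => (normShift P (ξ n)).coeff α - Q.coeff α) atTop (nhds 0) := by
      refine squeeze_zero_norm (fun n => ?_) h3
      have h4 := StmtAux.abs_coeff_le_tildeZero (normShift P (ξ n) - Q) α
      rw [MvPolynomial.coeff_sub] at h4
      simpa using h4
    have h5 := hb.add_const (Q.coeff α)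
    simpa using h5
  have hB3 := StmtAux.tendsto_tildeZero_div P N ξ h1 h2
  rw [← hm, ← hc0, ← ha] at hB3
  have hratio : Tendsto (fun n => (‖ξ n‖ ^ m / tildeZero (shiftP P (ξ n)) : ℝ)) atTop
      (nhds a⁻¹) := by
    have h5 := hB3.inv₀ (ne_of_gt ha0)
    apply h5.congr
    intro n
    rw [inv_div]
  have hratioC : Tendsto (fun n => (((‖ξ n‖ ^ m / tildeZero (shiftP P (ξ n)) : ℝ)) : ℂ)) atTop
      (nhds ((a⁻¹ : ℝ) : ℂ)) := (Complex.continuous_ofReal.tendsto _).comp hratio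
  have hpos : ∀ᶠ n in atTop, 0 < tildeZero (shiftP P (ξ n)) := by
    have h6 : ∀ᶠ n in atTop, 0 < tildeZero (shiftP P (ξ n)) / ‖ξ n‖ ^ m :=
      hB3.eventually (eventually_gt_nhds ha0)
    filter_upwards [h6, h1.eventually_ge_atTop 1] with n h7 h8
    have hr0 : (0:ℝ) < ‖ξ n‖ ^ m := pow_pos (lt_of_lt_of_le one_pos h8) m
    rcases div_pos_iff.mp h7 with ⟨ht, _⟩ | ⟨_, hneg⟩
    · exact ht
    · linarith
  have hB : ∀ α : Fin d →₀ ℕ, Tendsto (fun n => (normShift P (ξ n)).coeff α) atTop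
      (nhds (if α = 0 then c0 * ((a : ℝ) : ℂ)⁻¹ else 0)) := by
    intro α
    have hnum : Tendsto (fun n => (shiftP P (ξ n)).coeff α / ((‖ξ n‖ : ℂ)) ^ m) atTop
        (nhds (if α = 0 then c0 else 0)) := by
      by_cases hα : α = 0
      · rw [if_pos hα, hα]
        have heq : (fun n => (shiftP P (ξ n)).coeff 0 / ((‖ξ n‖ : ℂ)) ^ m)
            = fun n => evalP P (ξ n) / ((‖ξ n‖ : ℂ)) ^ m := by
          funext n; rw [StmtAux.coeff_zero_shiftP]
        rw [heq, hc0, hm]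
        exact StmtAux.tendsto_evalP_div P N ξ h1 h2
      · rw [if_neg hα]
        exact StmtAux.tendsto_coeff_div P ξ h1 α hα
    have hmul := hnum.mul hratioC
    have hkey : ∀ᶠ n in atTop, (normShift P (ξ n)).coeff α
        = ((shiftP P (ξ n)).coeff α / ((‖ξ n‖ : ℂ)) ^ m) *
          (((‖ξ n‖ ^ m / tildeZero (shiftP P (ξ n)) : ℝ)) : ℂ) := by
      filter_upwards [h1.eventually_ge_atTop 1, hpos] with n hn ht
      have hr0 : (0:ℝ) < ‖ξ n‖ := lt_of_lt_of_le one_pos hn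
      rw [normShift, MvPolynomial.coeff_smul, smul_eq_mul]
      have hrC : ((‖ξ n‖ : ℝ) : ℂ) ≠ 0 := by
        simp only [ne_eq, Complex.ofReal_eq_zero]
        exact ne_of_gt hr0
      have htC : ((tildeZero (shiftP P (ξ n)) : ℝ) : ℂ) ≠ 0 := by
        simp only [ne_eq, Complex.ofReal_eq_zero]
        exact ne_of_gt ht
      push_cast
      field_simp
    have hval : (if α = 0 then c0 else 0) * ((a⁻¹ : ℝ) : ℂ)
        = (if α = 0 then c0 * ((a : ℝ) : ℂ)⁻¹ else 0) := by
      by_cases hα : α = 0 <;> simp [hα, Complex.ofReal_inv]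
    rw [← hval]
    exact hmul.congr' (hkey.mono fun n hn => hn.symm)
  have hcoeff : ∀ α : Fin d →₀ ℕ, Q.coeff α = (if α = 0 then c0 * ((a : ℝ) : ℂ)⁻¹ else 0) :=
    fun α => tendsto_nhds_unique (hA α) (hB α)
  apply MvPolynomial.ext
  intro β
  rw [hcoeff β, MvPolynomial.coeff_C]
  by_cases hβ : β = 0
  · rw [hβ]
    simp [div_eq_mul_inv]
  · rw [if_neg hβ, if_neg (fun h => hβ h.symm)]

end
end

section
/- For every m ∈ ℕ there is a constant C > 0 with the following property: whenever N, x, y ∈ S¹ ⊆ ℝ² satisfy ⟨x,N⟩ = 0, and Q is a polynomial on ℝ² (with complex coefficients) of degree at most m satisfying Q(ξ + sN) = Q(ξ) for all ξ ∈ ℝ² and s ∈ ℝ, then for every t ≥ 1 one has Q̃_{span{y}}(0,t) ≥ C·|⟨y,x⟩|^m·Q̃(0,t). -/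
open MvPolynomial Filter Topology RealInnerProductSpace

noncomputable section

open Polynomial in
lemma eval_mv_aeval_poly {n : ℕ} (g : Fin n → Polynomial ℂ) (z : ℂ) (Q : MvPolynomial (Fin n) ℂ) :
    (MvPolynomial.aeval g Q).eval z = MvPolynomial.eval (fun i => (g i).eval z) Q := by
  induction Q using MvPolynomial.induction_on with
  | C a => simp
  | add p q hp hq => simp [hp, hq]
  | mul_X p i hp => simp [hp]

open Polynomial in
lemma natDegree_mv_aeval_le {n : ℕ} (g : Fin n → Polynomial ℂ)
    (hg : ∀ i, (g i).natDegree ≤ 1) (Q : MvPolynomial (Fin n) ℂ) :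
    (MvPolynomial.aeval g Q).natDegree ≤ Q.totalDegree := by
  rw [MvPolynomial.aeval_def, MvPolynomial.eval₂_eq]
  refine Polynomial.natDegree_sum_le_of_forall_le _ _ (fun d hd => ?_)
  refine (Polynomial.natDegree_C_mul_le _ _).trans ?_
  refine (Polynomial.natDegree_prod_le _ _).trans ?_
  refine le_trans ?_ (MvPolynomial.le_totalDegree hd)
  rw [Finsupp.sum]
  refine Finset.sum_le_sum (fun i _ => ?_)
  refine Polynomial.natDegree_pow_le.trans ?_
  calc d i * (g i).natDegree ≤ d i * 1 := Nat.mul_le_mul_left _ (hg i)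
    _ = d i := Nat.mul_one _

open Polynomial in
lemma cheby_bound (m : ℕ) (p : Polynomial ℂ) (hdeg : p.natDegree ≤ m) (a t M : ℝ)
    (ha : 0 < a) (hat : a ≤ t)
    (hM : ∀ u : ℝ, |u| ≤ a → ‖p.eval (u : ℂ)‖ ≤ M)
    (s : ℝ) (hs : |s| ≤ t) :
    ‖p.eval (s : ℂ)‖ ≤ (m + 1) * (t * max (m : ℝ) 1 / a) ^ m * M := by
  set M1 : ℝ := max (m : ℝ) 1 with hM1def
  have hM1pos : (0 : ℝ) < M1 := lt_of_lt_of_le one_pos (le_max_right _ _)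
  have ht : (0 : ℝ) < t := lt_of_lt_of_le ha hat
  have hM0 : 0 ≤ M := le_trans (norm_nonneg _) (hM 0 (by simp [le_of_lt ha]))
  set r : Fin (m + 1) → ℝ := fun j => -a + 2 * a * (j : ℝ) / M1 with hrdef
  have hrange : ∀ j : Fin (m + 1), |r j| ≤ a := by
    intro j
    have hj : (j : ℝ) ≤ M1 := le_trans (by exact_mod_cast Fin.is_le j) (le_max_left _ _)
    have hj0 : (0 : ℝ) ≤ (j : ℝ) := Nat.cast_nonneg _
    have key : 2 * a * (j : ℝ) / M1 ≤ 2 * a := by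
      rw [div_le_iff₀ hM1pos]; nlinarith
    have key0 : 0 ≤ 2 * a * (j : ℝ) / M1 := by positivity
    rw [abs_le]; constructor <;> simp only [hrdef] <;> linarith
  have hgap : ∀ i j : Fin (m + 1), i ≠ j → 2 * a / M1 ≤ |r i - r j| := by
    intro i j hij
    have hij' : (i : ℕ) ≠ (j : ℕ) := fun h => hij (Fin.ext h)
    have hone : (1 : ℝ) ≤ |(i : ℝ) - (j : ℝ)| := by
      have : (1 : ℤ) ≤ |(i : ℤ) - (j : ℤ)| :=
        Int.one_le_abs (sub_ne_zero.mpr (by exact_mod_cast hij'))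
      calc (1 : ℝ) ≤ ((|(i : ℤ) - (j : ℤ)| : ℤ) : ℝ) := by exact_mod_cast this
        _ = |(i : ℝ) - (j : ℝ)| := by push_cast [Int.cast_abs]; rfl
    have heq : r i - r j = 2 * a * ((i : ℝ) - (j : ℝ)) / M1 := by
      simp only [hrdef]; ring
    rw [heq, abs_div, abs_of_pos hM1pos, abs_mul, abs_of_pos (by linarith : (0:ℝ) < 2 * a)]
    exact (div_le_div_iff_of_pos_right hM1pos).mpr (by nlinarith [hone, ha])
  set v : Fin (m + 1) → ℂ := fun j => ((r j : ℝ) : ℂ) with hvdef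
  have hvinj : Set.InjOn v ↑(Finset.univ : Finset (Fin (m + 1))) := by
    intro i _ j _ h
    by_contra hij
    have h1 := hgap i j hij
    have h2 : r i = r j := by
      have : ((r i : ℝ) : ℂ) = ((r j : ℝ) : ℂ) := h
      exact_mod_cast this
    rw [h2, sub_self, abs_zero] at h1
    have : (0 : ℝ) < 2 * a / M1 := by positivity
    linarith
  have hdeg' : p.degree < ((Finset.univ : Finset (Fin (m + 1))).card : WithBot ℕ) := by
    rw [Finset.card_univ, Fintype.card_fin]
    refine lt_of_le_of_lt Polynomial.degree_le_natDegree ?_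
    exact_mod_cast Nat.lt_succ_of_le hdeg
  have hinterp := Lagrange.eq_interpolate hvinj hdeg'
  have heval : p.eval (s : ℂ) =
      ∑ j : Fin (m + 1), p.eval (v j) * Polynomial.eval (s : ℂ) (Lagrange.basis Finset.univ v j) := by
    conv_lhs => rw [hinterp]
    rw [Lagrange.interpolate_apply, Polynomial.eval_finset_sum]
    simp
  have hbasis : ∀ j : Fin (m + 1),
      ‖Polynomial.eval (s : ℂ) (Lagrange.basis Finset.univ v j)‖ ≤ (t * M1 / a) ^ m := by
    intro j
    rw [Lagrange.basis, Polynomial.eval_prod, norm_prod]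
    have hcard : (Finset.univ.erase j).card = m := by
      rw [Finset.card_erase_of_mem (Finset.mem_univ j), Finset.card_univ, Fintype.card_fin]
      omega
    calc ∏ k ∈ Finset.univ.erase j,
          ‖Polynomial.eval (s : ℂ) (Lagrange.basisDivisor (v j) (v k))‖
        ≤ ∏ _k ∈ Finset.univ.erase j, (t * M1 / a) := by
          refine Finset.prod_le_prod (fun _ _ => norm_nonneg _) (fun k hk => ?_)
          have hjk : j ≠ k := (Finset.ne_of_mem_erase hk).symm
          have heval2 : Polynomial.eval (s : ℂ) (Lagrange.basisDivisor (v j) (v k))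
              = (v j - v k)⁻¹ * ((s : ℂ) - v k) := by
            simp [Lagrange.basisDivisor]
          rw [heval2, norm_mul, norm_inv]
          have h1 : ‖v j - v k‖ = |r j - r k| := by
            simp only [hvdef, ← Complex.ofReal_sub, Complex.norm_real, Real.norm_eq_abs]
          have h2 : ‖(s : ℂ) - v k‖ = |s - r k| := by
            simp only [hvdef, ← Complex.ofReal_sub, Complex.norm_real, Real.norm_eq_abs]
          rw [h1, h2]
          have hden := hgap j k hjk
          have hnum : |s - r k| ≤ 2 * t := by
            calc |s - r k| ≤ |s| + |r k| := by
                  rw [sub_eq_add_neg]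
                  exact (abs_add_le _ _).trans (by rw [abs_neg])
              _ ≤ 2 * t := by have := hrange k; linarith
          have hpos : (0 : ℝ) < 2 * a / M1 := by positivity
          calc |r j - r k|⁻¹ * |s - r k| ≤ (2 * a / M1)⁻¹ * (2 * t) := by
                refine mul_le_mul (inv_anti₀ hpos hden) hnum (abs_nonneg _) ?_
                positivity
            _ = t * M1 / a := by field_simp
      _ = (t * M1 / a) ^ m := by rw [Finset.prod_const, hcard]
  calc ‖p.eval (s : ℂ)‖
      ≤ ∑ j : Fin (m + 1), ‖p.eval (v j)‖ *
          ‖Polynomial.eval (s : ℂ) (Lagrange.basis Finset.univ v j)‖ := by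
        rw [heval]
        refine (norm_sum_le _ _).trans ?_
        refine le_of_eq (Finset.sum_congr rfl (fun j _ => ?_))
        rw [norm_mul]
    _ ≤ ∑ _j : Fin (m + 1), M * (t * M1 / a) ^ m := by
        refine Finset.sum_le_sum (fun j _ => ?_)
        refine mul_le_mul (hM (r j) (hrange j)) (hbasis j) (norm_nonneg _) hM0
    _ = (m + 1) * (t * M1 / a) ^ m * M := by
        rw [Finset.sum_const, Finset.card_univ, Fintype.card_fin, nsmul_eq_mul]
        push_cast; ring

lemma decomp_two (x N : EuclideanSpace ℝ (Fin 2)) (hx : ‖x‖ = 1) (hN : ‖N‖ = 1)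
    (hxN : ⟪x, N⟫ = 0) (η : EuclideanSpace ℝ (Fin 2)) :
    η = ⟪x, η⟫ • x + ⟪N, η⟫ • N := by
  have hNx : ⟪N, x⟫ = 0 := by rw [real_inner_comm]; exact hxN
  have horth : Orthonormal ℝ ![x, N] := by
    constructor
    · intro i; fin_cases i <;> simpa
    · intro i j hij
      fin_cases i <;> fin_cases j <;> simp_all <;>
        simp [real_inner_self_eq_norm_sq] at *
  have hli := horth.linearIndependent
  have hspan : Submodule.span ℝ (Set.range ![x, N]) = ⊤ := by
    apply Submodule.eq_top_of_finrank_eq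
    rw [finrank_span_eq_card hli]
    simp [finrank_euclideanSpace_fin]
  have hrange : Set.range ![x, N] = {x, N} := by
    simp [Matrix.range_cons, Matrix.range_empty]
    exact Set.pair_comm N x
  have hmem : η ∈ Submodule.span ℝ ({x, N} : Set (EuclideanSpace ℝ (Fin 2))) := by
    rw [← hrange, hspan]; trivial
  obtain ⟨c, d, hcd⟩ := Submodule.mem_span_pair.mp hmem
  have hxx : ⟪x, x⟫ = 1 := by
    rw [real_inner_self_eq_norm_sq, hx]; norm_num
  have hNN : ⟪N, N⟫ = 1 := by
    rw [real_inner_self_eq_norm_sq, hN]; norm_num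
  have hc : ⟪x, η⟫ = c := by
    rw [← hcd, inner_add_right, real_inner_smul_right, real_inner_smul_right, hxx, hxN]; ring
  have hd : ⟪N, η⟫ = d := by
    rw [← hcd, inner_add_right, real_inner_smul_right, real_inner_smul_right, hNx, hNN]; ring
  rw [hc, hd, hcd]

/-- For every `m` there is `C > 0` such that for all `N, x, y ∈ S¹` with `⟨x,N⟩ = 0` and
every polynomial `Q` on `ℝ²` of degree at most `m` with `Q(ξ + sN) = Q(ξ)` for all `ξ, s`,
one has `Q̃_{span{y}}(0,t) ≥ C·|⟨y,x⟩|^m·Q̃(0,t)` for all `t ≥ 1`. -/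
theorem stmt8 (m : ℕ) :
    ∃ C : ℝ, 0 < C ∧ ∀ N x y : EuclideanSpace ℝ (Fin 2),
      ‖N‖ = 1 → ‖x‖ = 1 → ‖y‖ = 1 → ⟪x, N⟫ = 0 →
      ∀ Q : MvPolynomial (Fin 2) ℂ, Q.totalDegree ≤ m →
        (∀ (ξ : EuclideanSpace ℝ (Fin 2)) (s : ℝ), evalP Q (ξ + s • N) = evalP Q ξ) →
        ∀ t : ℝ, 1 ≤ t →
          tildeSupV Q (Submodule.span ℝ {y}) 0 t ≥ C * |⟪y, x⟫| ^ m * tildeSup Q 0 t := by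
  refine ⟨((m + 1 : ℝ) * (max (m : ℝ) 1) ^ m)⁻¹, by positivity, ?_⟩
  intro N x y hN hx hy hxN Q hQdeg hQinv t ht
  have ht0 : (0 : ℝ) < t := lt_of_lt_of_le one_pos ht
  set c : ℝ := ⟪y, x⟫ with hcdef
  set V := Submodule.span ℝ ({y} : Set (EuclideanSpace ℝ (Fin 2))) with hVdef
  set F : EuclideanSpace ℝ (Fin 2) → ℝ := fun η => ‖evalP Q η‖ with hFdef
  have hW : ∀ W : Submodule ℝ (EuclideanSpace ℝ (Fin 2)),
      tildeSupV Q W 0 t = sSup (F '' {η | η ∈ W ∧ ‖η‖ ≤ t}) := by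
    intro W
    unfold tildeSupV
    simp only [hFdef, zero_add]
  have hFcont : Continuous F := by
    rw [hFdef]
    refine continuous_norm.comp ?_
    unfold evalP
    have h1 : Continuous fun g : Fin 2 → ℂ => MvPolynomial.eval g Q :=
      MvPolynomial.continuous_eval Q
    have h2 : Continuous fun ξ : EuclideanSpace ℝ (Fin 2) => (fun i => ((ξ i : ℝ) : ℂ)) :=
      continuous_pi fun i => Complex.continuous_ofReal.comp (PiLp.continuous_apply 2 _ i)
    exact h1.comp h2
  have hbdd : ∀ W : Submodule ℝ (EuclideanSpace ℝ (Fin 2)),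
      BddAbove (F '' {η | η ∈ W ∧ ‖η‖ ≤ t}) := by
    intro W
    refine (((isCompact_closedBall (0 : EuclideanSpace ℝ (Fin 2)) t).image hFcont).bddAbove).mono
      (Set.image_mono ?_)
    intro η hη
    simpa [Metric.mem_closedBall, dist_zero_right] using hη.2
  have hnn : ∀ W : Submodule ℝ (EuclideanSpace ℝ (Fin 2)),
      (0 : ℝ) ≤ sSup (F '' {η | η ∈ W ∧ ‖η‖ ≤ t}) := by
    intro W
    refine Real.sSup_nonneg ?_
    rintro z ⟨η, _, rfl⟩
    exact norm_nonneg _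
  set p : Polynomial ℂ :=
    MvPolynomial.aeval (fun i => Polynomial.C ((x i : ℝ) : ℂ) * Polynomial.X) Q with hpdef
  have hpdeg : p.natDegree ≤ m := by
    refine le_trans (natDegree_mv_aeval_le _ (fun i => ?_) Q) hQdeg
    calc (Polynomial.C ((x i : ℝ) : ℂ) * Polynomial.X).natDegree
        ≤ (Polynomial.X : Polynomial ℂ).natDegree := Polynomial.natDegree_C_mul_le _ _
      _ ≤ 1 := le_of_eq Polynomial.natDegree_X
  have hkey1 : ∀ s : ℝ, p.eval (s : ℂ) = evalP Q (s • x) := by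
    intro s
    rw [hpdef, eval_mv_aeval_poly]
    unfold evalP
    have hfun : (fun i => Polynomial.eval (s : ℂ) (Polynomial.C ((x i : ℝ) : ℂ) * Polynomial.X))
        = fun i : Fin 2 => (((s • x) i : ℝ) : ℂ) := by
      funext i
      have hsx : ((s • x) i : ℝ) = s * x i := rfl
      rw [Polynomial.eval_mul, Polynomial.eval_C, Polynomial.eval_X, hsx]
      push_cast
      ring
    rw [hfun]
  have hkey2 : ∀ η : EuclideanSpace ℝ (Fin 2), evalP Q η = p.eval ((⟪x, η⟫ : ℝ) : ℂ) := by
    intro η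
    rw [hkey1]
    conv_lhs => rw [decomp_two x N hx hN hxN η]
    exact hQinv (⟪x, η⟫ • x) ⟪N, η⟫
  rw [ge_iff_le]
  by_cases hc : c = 0
  · by_cases hm : m = 0
    · subst hm
      have hp0 : p = Polynomial.C (p.coeff 0) :=
        Polynomial.eq_C_of_natDegree_le_zero (by simpa using hpdeg)
      have hconst : ∀ η, F η = ‖p.coeff 0‖ := by
        intro η
        rw [hFdef]
        simp only
        rw [hkey2 η]
        conv_lhs => rw [hp0]
        rw [Polynomial.eval_C]
      have hzero : ‖(0 : EuclideanSpace ℝ (Fin 2))‖ ≤ t := by simp; linarith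
      have hmemV : F 0 ∈ F '' {η | η ∈ V ∧ ‖η‖ ≤ t} :=
        ⟨0, ⟨Submodule.zero_mem V, hzero⟩, rfl⟩
      simp only [pow_zero, mul_one]
      norm_num
      rw [hW V]
      unfold tildeSup
      rw [hW ⊤]
      refine Real.sSup_le ?_ (hnn V)
      rintro z ⟨η, _, rfl⟩
      rw [hconst η]
      calc ‖p.coeff 0‖ = F 0 := (hconst 0).symm
        _ ≤ sSup (F '' {η | η ∈ V ∧ ‖η‖ ≤ t}) := le_csSup (hbdd V) hmemV
    · rw [hc, abs_zero, zero_pow hm, mul_zero, zero_mul]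
      rw [hW V]
      exact hnn V
  · have hcabs : (0 : ℝ) < |c| := abs_pos.mpr hc
    have hc1 : |c| ≤ 1 := by
      have h := abs_real_inner_le_norm y x
      rw [hy, hx] at h
      simpa [hcdef] using h
    set a := t * |c| with hadef
    have haa : (0 : ℝ) < a := mul_pos ht0 hcabs
    have hat : a ≤ t := by
      rw [hadef]
      nlinarith
    set MV := sSup (F '' {η | η ∈ V ∧ ‖η‖ ≤ t}) with hMVdef
    have hMVnn : 0 ≤ MV := hnn V
    have hMbound : ∀ u : ℝ, |u| ≤ a → ‖p.eval (u : ℂ)‖ ≤ MV := by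
      intro u hu
      set η' := (u / c) • y with hη'def
      have hmem : η' ∈ V := Submodule.smul_mem _ _ (Submodule.mem_span_singleton_self y)
      have hnorm : ‖η'‖ ≤ t := by
        rw [hη'def, norm_smul, hy, mul_one, Real.norm_eq_abs, abs_div, div_le_iff₀ hcabs]
        rw [hadef] at hu
        linarith
      have hinner : ⟪x, η'⟫ = u := by
        rw [hη'def, real_inner_smul_right]
        have hxy : ⟪x, y⟫ = c := by rw [hcdef, real_inner_comm]
        rw [hxy]
        field_simp
      have hFη : ‖p.eval (u : ℂ)‖ = F η' := by
        rw [hFdef]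
        simp only
        rw [hkey2 η', hinner]
      rw [hFη]
      exact le_csSup (hbdd V) ⟨η', ⟨hmem, hnorm⟩, rfl⟩
    have hsup : tildeSup Q 0 t ≤ (m + 1) * (t * max (m : ℝ) 1 / a) ^ m * MV := by
      unfold tildeSup
      rw [hW ⊤]
      refine Real.sSup_le ?_ (by positivity)
      rintro z ⟨η, ⟨_, hηt⟩, rfl⟩
      have hin : |⟪x, η⟫| ≤ t := by
        have h := abs_real_inner_le_norm x η
        rw [hx, one_mul] at h
        linarith
      have hFη : F η = ‖p.eval ((⟪x, η⟫ : ℝ) : ℂ)‖ := by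
        rw [hFdef]
        simp only
        rw [hkey2 η]
      rw [hFη]
      exact cheby_bound m p hpdeg a t MV haa hat hMbound _ hin
    have hM1pos : (0 : ℝ) < max (m : ℝ) 1 := lt_of_lt_of_le one_pos (le_max_right _ _)
    calc ((m + 1 : ℝ) * (max (m : ℝ) 1) ^ m)⁻¹ * |c| ^ m * tildeSup Q 0 t
        ≤ ((m + 1 : ℝ) * (max (m : ℝ) 1) ^ m)⁻¹ * |c| ^ m *
            ((m + 1) * (t * max (m : ℝ) 1 / a) ^ m * MV) := by
          refine mul_le_mul_of_nonneg_left hsup (by positivity)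
      _ = MV := by
          rw [hadef]
          have h1 : t * max (m : ℝ) 1 / (t * |c|) = max (m : ℝ) 1 / |c| := by
            rw [div_eq_div_iff (by positivity) (ne_of_gt hcabs)]
            ring
          rw [h1, div_pow]
          have h2 : |c| ^ m ≠ 0 := pow_ne_zero _ (ne_of_gt hcabs)
          have h3 : ((m + 1 : ℝ) * (max (m : ℝ) 1) ^ m) ≠ 0 := by positivity
          field_simp
      _ = tildeSupV Q V 0 t := by rw [hW V]

end
end

section
/- Let d ≥ 3 and let P be the polynomial on ℝ^d given by P(x₁,…,x_d) = x₁² − x₂² − ⋯ − x_d². Then σ_P(e_d) = 0, where e_d = (0,…,0,1), although the principal part P₂ = P satisfies P₂(e_d) = −1 ≠ 0. In particular, for d ≥ 3 the inclusion {y ∈ S^{d−1} : σ_P(y) = 0} ⊆ {y ∈ S^{d−1} : P_m(y) = 0} fails in general. -/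
open MvPolynomial Filter Topology RealInnerProductSpace

noncomputable section

set_option maxHeartbeats 1000000 in
/-- Example 2.4: for `d ≥ 3` and `P(x) = x₁² - x₂² - ⋯ - x_d²` one has `σ_P(e_d) = 0`
although `P₂(e_d) = -1 ≠ 0`; in particular the inclusion
`{y ∈ S^{d-1} : σ_P(y) = 0} ⊆ {y ∈ S^{d-1} : P_m(y) = 0}` fails. -/
theorem stmt9 (d : ℕ) (hd : 3 ≤ d) :
    let P : MvPolynomial (Fin d) ℂ :=
      MvPolynomial.X (⟨0, by omega⟩ : Fin d) ^ 2 -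
        ∑ i ∈ Finset.univ.filter (fun i : Fin d => (i : ℕ) ≠ 0), MvPolynomial.X i ^ 2
    let ed : EuclideanSpace ℝ (Fin d) := EuclideanSpace.single (⟨d - 1, by omega⟩ : Fin d) 1
    sigmaPt P ed = 0 ∧
      evalP (MvPolynomial.homogeneousComponent P.totalDegree P) ed = -1 ∧
      ¬ ({y : EuclideanSpace ℝ (Fin d) | ‖y‖ = 1 ∧ sigmaPt P y = 0} ⊆
          {y : EuclideanSpace ℝ (Fin d) | ‖y‖ = 1 ∧
            evalP (MvPolynomial.homogeneousComponent P.totalDegree P) y = 0}) := by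
  intro P ed
  have hd0 : 0 < d := by omega
  set i0 : Fin d := ⟨0, by omega⟩ with hi0
  set i1 : Fin d := ⟨1, by omega⟩ with hi1
  set iD : Fin d := ⟨d - 1, by omega⟩ with hiD
  set fil : Finset (Fin d) := Finset.univ.filter (fun i : Fin d => (i : ℕ) ≠ 0) with hfil
  have hP : P = MvPolynomial.X i0 ^ 2 - ∑ i ∈ fil, MvPolynomial.X i ^ 2 := rfl
  have hed : ed = EuclideanSpace.single iD 1 := rfl
  have h10 : i1 ≠ i0 := by simp [hi0, hi1, Fin.ext_iff]
  have hD0 : iD ≠ i0 := by simp [hi0, hiD, Fin.ext_iff]; omega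
  have hD1 : iD ≠ i1 := by simp [hi1, hiD, Fin.ext_iff]; omega
  have h1fil : i1 ∈ fil := by simp [hfil, hi1]
  have hDfil : iD ∈ fil := by simp [hfil, hiD]; omega
  -- evaluation of P as a real expression
  have h_eval : ∀ x : EuclideanSpace ℝ (Fin d),
      evalP P x = (((x i0) ^ 2 - ∑ i ∈ fil, (x i) ^ 2 : ℝ) : ℂ) := by
    intro x
    rw [hP]
    simp only [evalP, map_sub, map_sum, map_pow, MvPolynomial.eval_X]
    push_cast
    ring
  have h_abs : ∀ x : EuclideanSpace ℝ (Fin d),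
      ‖evalP P x‖ = |(x i0) ^ 2 - ∑ i ∈ fil, (x i) ^ 2| := by
    intro x; rw [h_eval, Complex.norm_real, Real.norm_eq_abs]
  -- key sum lemma
  have key : ∀ a b c : ℝ,
      ∑ i ∈ fil, (((a • EuclideanSpace.single i0 (1:ℝ) + b • EuclideanSpace.single i1 1
        + c • EuclideanSpace.single iD 1 : EuclideanSpace ℝ (Fin d)) i) ^ 2) = b ^ 2 + c ^ 2 := by
    intro a b c
    have : ∀ i ∈ fil,
        (((a • EuclideanSpace.single i0 (1:ℝ) + b • EuclideanSpace.single i1 1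
          + c • EuclideanSpace.single iD 1 : EuclideanSpace ℝ (Fin d)) i) ^ 2)
        = (if i = i1 then b ^ 2 else 0) + (if i = iD then c ^ 2 else 0) := by
      intro i hi
      have hi0' : i ≠ i0 := by
        simp only [hfil, Finset.mem_filter] at hi
        intro h; exact hi.2 (by simp [h, hi0])
      by_cases h1 : i = i1 <;> by_cases h2 : i = iD <;>
        simp_all [PiLp.add_apply, PiLp.smul_apply, EuclideanSpace.single_apply,
          smul_eq_mul, Ne.symm]
    rw [Finset.sum_congr rfl this, Finset.sum_add_distrib,
      Finset.sum_ite_eq' fil i1 (fun _ => b ^ 2), Finset.sum_ite_eq' fil iD (fun _ => c ^ 2),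
      if_pos h1fil, if_pos hDfil]
  have keyc : ∀ a b c : ℝ,
      ((a • EuclideanSpace.single i0 (1:ℝ) + b • EuclideanSpace.single i1 1
        + c • EuclideanSpace.single iD 1 : EuclideanSpace ℝ (Fin d)) i0) = a := by
    intro a b c
    simp [PiLp.add_apply, PiLp.smul_apply, EuclideanSpace.single_apply, Ne.symm h10,
      Ne.symm hD0]
  have keyg : ∀ a b c : ℝ,
      ‖evalP P (a • EuclideanSpace.single i0 (1:ℝ)
        + b • EuclideanSpace.single i1 1 + c • EuclideanSpace.single iD 1)‖
      = |a ^ 2 - (b ^ 2 + c ^ 2)| := by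
    intro a b c; rw [h_abs, key, keyc]
  -- continuity and compactness facts
  have hcont : Continuous fun x : EuclideanSpace ℝ (Fin d) => ‖evalP P x‖ := by
    have h : (fun x : EuclideanSpace ℝ (Fin d) => ‖evalP P x‖)
        = fun x => |(x i0) ^ 2 - ∑ i ∈ fil, (x i) ^ 2| := funext h_abs
    rw [h]
    apply Continuous.abs
    apply Continuous.sub
    · exact ((EuclideanSpace.proj i0).continuous).pow 2
    · exact continuous_finset_sum _ fun i _ => ((EuclideanSpace.proj i).continuous).pow 2
  have hKcompact : ∀ (V : Submodule ℝ (EuclideanSpace ℝ (Fin d)))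
      (ξ : EuclideanSpace ℝ (Fin d)) (t : ℝ),
      IsCompact ((fun η => ‖evalP P (ξ + η)‖) '' {η | η ∈ V ∧ ‖η‖ ≤ t}) := by
    intro V ξ t
    apply IsCompact.image
    · have h : {η : EuclideanSpace ℝ (Fin d) | η ∈ V ∧ ‖η‖ ≤ t}
          = (V : Set (EuclideanSpace ℝ (Fin d))) ∩ Metric.closedBall 0 t := by
        ext η; simp [Metric.mem_closedBall, dist_zero_right]
      rw [h]
      exact (isCompact_closedBall (0 : EuclideanSpace ℝ (Fin d)) t).inter_left
        V.closed_of_finiteDimensional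
    · exact hcont.comp (continuous_const.add continuous_id)
  have hBdd : ∀ (V : Submodule ℝ (EuclideanSpace ℝ (Fin d)))
      (ξ : EuclideanSpace ℝ (Fin d)) (t : ℝ),
      BddAbove ((fun η => ‖evalP P (ξ + η)‖) '' {η | η ∈ V ∧ ‖η‖ ≤ t}) :=
    fun V ξ t => (hKcompact V ξ t).bddAbove
  have hNe : ∀ (V : Submodule ℝ (EuclideanSpace ℝ (Fin d)))
      (ξ : EuclideanSpace ℝ (Fin d)) (t : ℝ), 0 ≤ t →
      ((fun η => ‖evalP P (ξ + η)‖) '' {η | η ∈ V ∧ ‖η‖ ≤ t}).Nonempty := by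
    intro V ξ t ht
    exact ⟨_, Set.mem_image_of_mem _ ⟨V.zero_mem, by simp [ht]⟩⟩
  -- basic bounds on tildeSupV
  have h_lb : ∀ (V : Submodule ℝ (EuclideanSpace ℝ (Fin d)))
      (ξ η : EuclideanSpace ℝ (Fin d)) (t : ℝ), η ∈ V → ‖η‖ ≤ t →
      ‖evalP P (ξ + η)‖ ≤ tildeSupV P V ξ t := by
    intro V ξ η t hη hηt
    exact le_csSup (hBdd V ξ t) (Set.mem_image_of_mem _ ⟨hη, hηt⟩)
  have h_nonneg : ∀ (V : Submodule ℝ (EuclideanSpace ℝ (Fin d)))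
      (ξ : EuclideanSpace ℝ (Fin d)) (t : ℝ), 0 ≤ t → 0 ≤ tildeSupV P V ξ t := by
    intro V ξ t ht
    exact le_trans (norm_nonneg _) (h_lb V ξ 0 t V.zero_mem (by simp [ht]))
  have h_mono : ∀ (V : Submodule ℝ (EuclideanSpace ℝ (Fin d)))
      (ξ : EuclideanSpace ℝ (Fin d)) (t : ℝ), 0 ≤ t →
      tildeSupV P V ξ t ≤ tildeSup P ξ t := by
    intro V ξ t ht
    apply csSup_le_csSup (hBdd ⊤ ξ t) (hNe V ξ t ht)
    exact Set.image_mono fun η hη => ⟨Submodule.mem_top, hη.2⟩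
  -- the distinguished direction and norms
  have hedn : ‖ed‖ = 1 := by rw [hed, EuclideanSpace.norm_single]; simp
  set V : Submodule ℝ (EuclideanSpace ℝ (Fin d)) := Submodule.span ℝ {ed} with hV
  -- the escape sequence
  set u : ℕ → EuclideanSpace ℝ (Fin d) := fun n =>
    (n : ℝ) • (EuclideanSpace.single i0 (1:ℝ) + EuclideanSpace.single i1 1) with hu_def
  have hu_norm : ∀ n : ℕ, ‖u n‖ = (n : ℝ) * ‖(EuclideanSpace.single i0 (1:ℝ)
      + EuclideanSpace.single i1 1 : EuclideanSpace ℝ (Fin d))‖ := by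
    intro n; simp only [hu_def]; rw [norm_smul, Real.norm_natCast]
  have hvpos : 0 < ‖(EuclideanSpace.single i0 (1:ℝ)
      + EuclideanSpace.single i1 1 : EuclideanSpace ℝ (Fin d))‖ := by
    rw [norm_pos_iff]
    intro h
    have := congrArg (fun v : EuclideanSpace ℝ (Fin d) => v i0) h
    simp [PiLp.add_apply, EuclideanSpace.single_apply, Ne.symm h10] at this
  have hu : Tendsto u atTop (toInfty d) := by
    rw [toInfty, Filter.tendsto_comap_iff]
    have h : (fun ξ : EuclideanSpace ℝ (Fin d) => ‖ξ‖) ∘ u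
        = fun n : ℕ => (n : ℝ) * ‖(EuclideanSpace.single i0 (1:ℝ)
          + EuclideanSpace.single i1 1 : EuclideanSpace ℝ (Fin d))‖ := funext hu_norm
    rw [h]
    exact Tendsto.atTop_mul_const hvpos tendsto_natCast_atTop_atTop
  have hFne : (toInfty d).NeBot := Filter.neBot_of_le hu
  -- the liminf vanishes for every t ≥ 1
  have hlim : ∀ t : ℝ, 1 ≤ t →
      Filter.liminf (fun ξ => tildeSupV P V ξ t / tildeSup P ξ t) (toInfty d) = 0 := by
    intro t ht
    have ht0 : (0:ℝ) ≤ t := le_trans zero_le_one ht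
    set f : EuclideanSpace ℝ (Fin d) → ℝ := fun ξ => tildeSupV P V ξ t / tildeSup P ξ t
      with hf_def
    have hf0 : ∀ ξ, 0 ≤ f ξ := fun ξ =>
      div_nonneg (h_nonneg V ξ t ht0) (h_nonneg ⊤ ξ t ht0)
    have hf1 : ∀ ξ, f ξ ≤ 1 := fun ξ =>
      div_le_one_of_le₀ (h_mono V ξ t ht0) (h_nonneg ⊤ ξ t ht0)
    -- bound along the sequence
    have hA : ∀ n : ℕ, tildeSupV P V (u n) t ≤ t ^ 2 := by
      intro n
      apply csSup_le (hNe V (u n) t ht0)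
      rintro y ⟨η, ⟨hηV, hηt⟩, rfl⟩
      obtain ⟨s, rfl⟩ := Submodule.mem_span_singleton.mp hηV
      have hs : |s| ≤ t := by
        rwa [norm_smul, hedn, mul_one, Real.norm_eq_abs] at hηt
      have hform : u n + s • ed = (n : ℝ) • EuclideanSpace.single i0 (1:ℝ)
          + (n : ℝ) • EuclideanSpace.single i1 1 + s • EuclideanSpace.single iD 1 := by
        rw [hu_def, hed]; module
      show ‖evalP P (u n + s • ed)‖ ≤ t ^ 2
      rw [hform, keyg]
      have : ((n:ℝ) ^ 2 - ((n:ℝ) ^ 2 + s ^ 2)) = -(s ^ 2) := by ring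
      rw [this, abs_neg, abs_of_nonneg (sq_nonneg s)]
      calc s ^ 2 = |s| ^ 2 := (sq_abs s).symm
        _ ≤ t ^ 2 := by nlinarith [abs_nonneg s]
    have hB : ∀ n : ℕ, (n : ℝ) ≤ tildeSup P (u n) t := by
      intro n
      have hform : u n + t • EuclideanSpace.single i0 (1:ℝ)
          = ((n : ℝ) + t) • EuclideanSpace.single i0 (1:ℝ)
          + (n : ℝ) • EuclideanSpace.single i1 1 + (0:ℝ) • EuclideanSpace.single iD 1 := by
        rw [hu_def]; module
      have h1 : ‖evalP P (u n + t • EuclideanSpace.single i0 (1:ℝ))‖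
          = |((n : ℝ) + t) ^ 2 - ((n:ℝ) ^ 2 + (0:ℝ) ^ 2)| := by rw [hform, keyg]
      have h2 : (n : ℝ) ≤ |((n : ℝ) + t) ^ 2 - ((n:ℝ) ^ 2 + (0:ℝ) ^ 2)| := by
        have hn0 : (0:ℝ) ≤ (n:ℝ) := Nat.cast_nonneg n
        have : ((n : ℝ) + t) ^ 2 - ((n:ℝ) ^ 2 + (0:ℝ) ^ 2) = 2 * n * t + t ^ 2 := by ring
        rw [this, abs_of_nonneg (by nlinarith)]
        nlinarith
      calc (n : ℝ) ≤ ‖evalP P (u n + t • EuclideanSpace.single i0 (1:ℝ))‖ := by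
            rw [h1]; exact h2
        _ ≤ tildeSup P (u n) t := h_lb ⊤ (u n) _ t Submodule.mem_top
            (by rw [norm_smul, EuclideanSpace.norm_single, norm_one, mul_one,
                  Real.norm_eq_abs, abs_of_nonneg ht0])
    have hfu : Tendsto (f ∘ u) atTop (nhds 0) := by
      refine squeeze_zero' (g := fun n : ℕ => t ^ 2 / (n : ℝ))
        (Filter.Eventually.of_forall fun n => hf0 (u n)) ?_
        (tendsto_const_div_atTop_nhds_zero_nat (t ^ 2))
      filter_upwards [Filter.eventually_ge_atTop 1] with n hn
      have hnpos : (0:ℝ) < (n:ℝ) := by exact_mod_cast hn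
      exact div_le_div₀ (sq_nonneg t) (hA n) hnpos (hB n)
    apply le_antisymm
    · have hmaple : Filter.map u atTop ≤ toInfty d := hu
      have step1 : Filter.liminf f (toInfty d) ≤ Filter.liminf f (Filter.map u atTop) := by
        exact Filter.liminf_le_liminf_of_le hmaple
          ⟨0, Filter.eventually_map.2 (Filter.Eventually.of_forall fun ξ => hf0 ξ)⟩
          (Filter.isCoboundedUnder_ge_of_eventually_le (Filter.map u atTop) (x := 1)
            (Filter.Eventually.of_forall fun ξ => hf1 ξ))
      calc Filter.liminf f (toInfty d) ≤ Filter.liminf f (Filter.map u atTop) := step1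
        _ = Filter.liminf (f ∘ u) atTop := (Filter.liminf_comp f u atTop).symm
        _ = 0 := hfu.liminf_eq
    · exact Filter.le_liminf_of_le
        (Filter.isCoboundedUnder_ge_of_eventually_le (toInfty d) (x := 1)
          (Filter.Eventually.of_forall fun ξ => hf1 ξ))
        (Filter.Eventually.of_forall fun ξ => hf0 ξ)
  -- σ_P(e_d) = 0
  have hsig : sigmaPt P ed = 0 := by
    have hset : {r : ℝ | ∃ t : ℝ, 1 ≤ t ∧
        r = Filter.liminf (fun ξ => tildeSupV P V ξ t / tildeSup P ξ t) (toInfty d)}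
        = {0} := by
      ext r
      simp only [Set.mem_setOf_eq, Set.mem_singleton_iff]
      constructor
      · rintro ⟨t, ht, rfl⟩; exact hlim t ht
      · rintro rfl; exact ⟨1, le_rfl, (hlim 1 le_rfl).symm⟩
    rw [sigmaPt, ← hV, sigmaP, hset, csInf_singleton]
  -- total degree
  have htd : P.totalDegree = 2 := by
    apply le_antisymm
    · rw [hP]
      apply le_trans (MvPolynomial.totalDegree_sub _ _)
      apply max_le
      · exact le_of_eq (MvPolynomial.totalDegree_X_pow _ _)
      · exact MvPolynomial.totalDegree_finsetSum_le fun i _ =>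
          le_of_eq (MvPolynomial.totalDegree_X_pow _ _)
    · have hcoeff : MvPolynomial.coeff (Finsupp.single i0 2) P = 1 := by
        rw [hP, MvPolynomial.coeff_sub, MvPolynomial.coeff_sum]
        rw [MvPolynomial.coeff_X_pow, if_pos rfl]
        have : ∀ i ∈ fil, MvPolynomial.coeff (Finsupp.single i0 2)
            ((MvPolynomial.X i : MvPolynomial (Fin d) ℂ) ^ 2) = 0 := by
          intro i hi
          rw [MvPolynomial.coeff_X_pow, if_neg]
          intro h
          have : i = i0 := (Finsupp.single_left_inj (two_ne_zero)).mp h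
          simp only [hfil, Finset.mem_filter] at hi
          exact hi.2 (by simp [this, hi0])
        rw [Finset.sum_congr rfl this]
        simp
      have hmem : Finsupp.single i0 2 ∈ P.support := by
        rw [MvPolynomial.mem_support_iff, hcoeff]; exact one_ne_zero
      have := MvPolynomial.le_totalDegree hmem
      simpa [Finsupp.sum_single_index] using this
  -- homogeneity
  have hhom : P ∈ MvPolynomial.homogeneousSubmodule (Fin d) ℂ 2 := by
    rw [MvPolynomial.mem_homogeneousSubmodule, hP]
    apply MvPolynomial.IsHomogeneous.sub
    · simpa using (MvPolynomial.isHomogeneous_X ℂ i0).pow 2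
    · apply MvPolynomial.IsHomogeneous.sum
      intro i _
      simpa using (MvPolynomial.isHomogeneous_X ℂ i).pow 2
  have hcomp : MvPolynomial.homogeneousComponent P.totalDegree P = P := by
    rw [htd, MvPolynomial.homogeneousComponent_of_mem hhom, if_pos rfl]
  -- evaluation of the principal part at ed
  have hevP : evalP (MvPolynomial.homogeneousComponent P.totalDegree P) ed = -1 := by
    rw [hcomp]
    have hform : ed = (0:ℝ) • EuclideanSpace.single i0 (1:ℝ)
        + (0:ℝ) • EuclideanSpace.single i1 1 + (1:ℝ) • EuclideanSpace.single iD 1 := by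
      rw [hed]; module
    rw [hform] at *
    rw [h_eval, key, keyc]
    norm_num
  refine ⟨hsig, hevP, ?_⟩
  intro hsub
  have h1 : ed ∈ {y : EuclideanSpace ℝ (Fin d) | ‖y‖ = 1 ∧ sigmaPt P y = 0} := ⟨hedn, hsig⟩
  have h2 := hsub h1
  rw [Set.mem_setOf_eq] at h2
  rw [hevP] at h2
  exact absurd h2.2 (by norm_num)

end
end
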